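/- For every matrix A in SL₂(ℝ) there exist real numbers θ₁, θ₂ and a real number r ≥ 1 such that A = e(θ₁) · D(r) · e(θ₂), where D(r) is the diagonal matrix with diagonal entries r and r⁻¹. (Cartan decomposition of SL₂(ℝ).) -/

import Mathlib

open Real Matrix

/-- The rotation matrix `e(θ)` with rows `(cos θ, sin θ)` and `(-sin θ, cos θ)`. -/
noncomputable def rotMat (θ : ℝ) : Matrix (Fin 2) (Fin 2) ℝ :=
  !![Real.cos θ, Real.sin θ; -Real.sin θ, Real.cos θ]

/-- **Cartan decomposition of SL₂(ℝ)**: every `A ∈ SL₂(ℝ)` can be written as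
`A = e(θ₁) · D(r) · e(θ₂)` with `r ≥ 1`, where `D(r) = diag(r, r⁻¹)`. -/
theorem sl2_cartan_decomposition (A : Matrix.SpecialLinearGroup (Fin 2) ℝ) :
    ∃ (θ₁ θ₂ r : ℝ), 1 ≤ r ∧
      (A : Matrix (Fin 2) (Fin 2) ℝ) = rotMat θ₁ * !![r, 0; 0, r⁻¹] * rotMat θ₂ := by
  set a := (A : Matrix (Fin 2) (Fin 2) ℝ) 0 0 with ha
  set b := (A : Matrix (Fin 2) (Fin 2) ℝ) 0 1 with hb
  set c := (A : Matrix (Fin 2) (Fin 2) ℝ) 1 0 with hc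
  set d := (A : Matrix (Fin 2) (Fin 2) ℝ) 1 1 with hd
  have hdet : a * d - b * c = 1 := by
    have := A.property
    rwa [Matrix.det_fin_two] at this
  set z : ℂ := ⟨a + d, b - c⟩ with hz
  set w : ℂ := ⟨a - d, -(b + c)⟩ with hw
  set K := ‖z‖ with hK
  set W := ‖w‖ with hW
  have hK2 : K ^ 2 = (a + d) ^ 2 + (b - c) ^ 2 := by
    rw [hK, Complex.sq_norm, Complex.normSq_apply, hz]
    ring
  have hW2 : W ^ 2 = (a - d) ^ 2 + (b + c) ^ 2 := by
    rw [hW, Complex.sq_norm, Complex.normSq_apply, hw]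
    ring
  have hKW : K ^ 2 = W ^ 2 + 4 := by
    rw [hK2, hW2]; nlinarith [hdet]
  have hK0 : 0 ≤ K := norm_nonneg z
  have hW0 : 0 ≤ W := norm_nonneg w
  have hK2' : 2 ≤ K := by nlinarith [sq_nonneg W]
  have hsW : Real.sqrt (K ^ 2 - 4) = W := by
    rw [show K ^ 2 - 4 = W ^ 2 by linarith, Real.sqrt_sq hW0]
  obtain ⟨r, hr⟩ : ∃ r : ℝ, r = (K + W) / 2 := ⟨_, rfl⟩
  have hr1 : 1 ≤ r := by
    rw [hr]; linarith
  have hr0 : r ≠ 0 := by positivity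
  have hrinv : r⁻¹ = (K - W) / 2 := by
    have h : r * ((K - W) / 2) = 1 := by rw [hr]; nlinarith
    exact inv_eq_of_mul_eq_one_right h
  have hRK : r + r⁻¹ = K := by rw [hrinv, hr]; ring
  have hrW : r - r⁻¹ = W := by rw [hrinv, hr]; ring
  set φ := z.arg with hφ
  set ψ := w.arg with hψ
  refine ⟨(φ + ψ) / 2, (φ - ψ) / 2, r, hr1, ?_⟩
  set θ₁ := (φ + ψ) / 2 with hθ₁
  set θ₂ := (φ - ψ) / 2 with hθ₂
  have hφ' : θ₁ + θ₂ = φ := by rw [hθ₁, hθ₂]; ring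
  have hψ' : θ₁ - θ₂ = ψ := by rw [hθ₁, hθ₂]; ring
  have e1 : (r + r⁻¹) * Real.cos (θ₁ + θ₂) = a + d := by
    rw [hRK, hφ']
    exact Complex.norm_mul_cos_arg z
  have e2 : (r + r⁻¹) * Real.sin (θ₁ + θ₂) = b - c := by
    rw [hRK, hφ']
    exact Complex.norm_mul_sin_arg z
  have e3 : (r - r⁻¹) * Real.cos (θ₁ - θ₂) = a - d := by
    rw [hrW, hψ']
    exact Complex.norm_mul_cos_arg w
  have e4 : (r - r⁻¹) * Real.sin (θ₁ - θ₂) = -(b + c) := by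
    rw [hrW, hψ']
    exact Complex.norm_mul_sin_arg w
  simp only [Real.cos_add, Real.sin_add, Real.cos_sub, Real.sin_sub] at e1 e2 e3 e4
  ext i j
  fin_cases i <;> fin_cases j <;>
    simp [rotMat, Matrix.mul_apply, Fin.sum_univ_succ]
  · rw [← ha]; linear_combination -e1 / 2 - e3 / 2
  · rw [← hb]; linear_combination e4 / 2 - e2 / 2
  · rw [← hc]; linear_combination e2 / 2 + e4 / 2
  · rw [← hd]; linear_combination e3 / 2 - e1 / 2
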